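/- arXiv:1012.5957 — 2 statements merged into one kernel-verified Lean document; each statement's English description precedes it below -/
import Mathlib

section
/- Let D^i × D^j be embedded in the boundary sphere of a closed disc D^N by a standard embedding (N > i + j), i.e. as a product of coordinate discs in a coordinate chart of ∂D^N = S^{N-1}. Then the quotient of D^N by the relation identifying (x,y) with (x,y') for all x ∈ D^i and y, y' ∈ D^j (collapsing the D^j factor on the embedded product) is homeomorphic to D^N. -/
open Metric

noncomputable section

/-- A standard embedding of `D^i × D^j` (a product of coordinate discs of radius `1/2`
in a coordinate chart of the boundary sphere `∂D^N = S^{N-1}`) into the unit sphere of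
`ℝ^N`: `(x, y) ↦ (x, y, 0, …, 0, √(1 - ‖x‖² - ‖y‖²))`. -/
def stdEmb (i j N : ℕ) (x : EuclideanSpace ℝ (Fin i)) (y : EuclideanSpace ℝ (Fin j)) :
    EuclideanSpace ℝ (Fin N) :=
  (WithLp.equiv 2 (Fin N → ℝ)).symm fun k =>
    if h : (k : ℕ) < i then x ⟨k, h⟩
    else if h2 : (k : ℕ) < i + j then y ⟨(k : ℕ) - i, by omega⟩
    else if (k : ℕ) = N - 1 then Real.sqrt (1 - ‖x‖ ^ 2 - ‖y‖ ^ 2) else 0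

/-- The relation on the closed disc `D^N` identifying `(x, y)` with `(x, y')` on the
standardly embedded product `D^i × D^j ⊆ ∂D^N`, i.e. collapsing the `D^j` factor. -/
def collapseRel (i j N : ℕ) (a b : ↥(closedBall (0 : EuclideanSpace ℝ (Fin N)) 1)) : Prop :=
  ∃ (x : EuclideanSpace ℝ (Fin i)) (y y' : EuclideanSpace ℝ (Fin j)),
    ‖x‖ ≤ 1 / 2 ∧ ‖y‖ ≤ 1 / 2 ∧ ‖y'‖ ≤ 1 / 2 ∧
    (a : EuclideanSpace ℝ (Fin N)) = stdEmb i j N x y ∧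
    (b : EuclideanSpace ℝ (Fin N)) = stdEmb i j N x y'

set_option maxHeartbeats 1000000
open Finset

namespace Stmt7Aux

def nsq (N : ℕ) (p : EuclideanSpace ℝ (Fin N)) : ℝ := ∑ k, (p k)^2
def su (i N : ℕ) (p : EuclideanSpace ℝ (Fin N)) : ℝ :=
  ∑ k ∈ univ.filter (fun k : Fin N => (k:ℕ) < i), (p k)^2
def sv (i j N : ℕ) (p : EuclideanSpace ℝ (Fin N)) : ℝ :=
  ∑ k ∈ univ.filter (fun k : Fin N => i ≤ (k:ℕ) ∧ (k:ℕ) < i + j), (p k)^2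
def sw (i j N : ℕ) (p : EuclideanSpace ℝ (Fin N)) : ℝ :=
  ∑ k ∈ univ.filter (fun k : Fin N => i + j ≤ (k:ℕ) ∧ (k:ℕ) < N - 1), (p k)^2
def tc (N : ℕ) (p : EuclideanSpace ℝ (Fin N)) : ℝ :=
  ∑ k ∈ univ.filter (fun k : Fin N => (k:ℕ) = N - 1), p k

def th (i j N : ℕ) (p : EuclideanSpace ℝ (Fin N)) : ℝ :=
  (1 - nsq N p) + sw i j N p + max (su i N p - 1/4) 0 + max (sv i j N p - 1/4) 0
    + max (7/10 - tc N p) 0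

def ph (i j N : ℕ) (p : EuclideanSpace ℝ (Fin N)) : ℝ := min 1 (10 * th i j N p)

def Tt (i j N : ℕ) (p : EuclideanSpace ℝ (Fin N)) : ℝ :=
  Real.sqrt ((max (tc N p) 0)^2 + (1 - (ph i j N p)^2) * sv i j N p) + min (tc N p) 0

def G (i j N : ℕ) (p : EuclideanSpace ℝ (Fin N)) : EuclideanSpace ℝ (Fin N) :=
  (WithLp.equiv 2 (Fin N → ℝ)).symm fun k =>
    if (k:ℕ) < i then p k
    else if (k:ℕ) < i + j then ph i j N p * p k
    else if (k:ℕ) = N - 1 then Tt i j N p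
    else p k

lemma G_apply (i j N : ℕ) (p : EuclideanSpace ℝ (Fin N)) (k : Fin N) :
    G i j N p k =
      if (k:ℕ) < i then p k
      else if (k:ℕ) < i + j then ph i j N p * p k
      else if (k:ℕ) = N - 1 then Tt i j N p
      else p k :=
  rfl

-- reindexing
lemma sum_filter_lt (i N : ℕ) (hiN : i ≤ N) (f : Fin N → ℝ) :
    ∑ k ∈ univ.filter (fun k : Fin N => (k:ℕ) < i), f k
      = ∑ k : Fin i, f ⟨k, by omega⟩ := by
  have hmap : univ.filter (fun k : Fin N => (k:ℕ) < i)
      = (univ : Finset (Fin i)).map ⟨fun k : Fin i => (⟨k, by omega⟩ : Fin N),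
          fun a b hab => by simpa [Fin.ext_iff] using hab⟩ := by
    ext k
    simp only [mem_filter, mem_univ, true_and, Finset.mem_map, Function.Embedding.coeFn_mk]
    constructor
    · intro hk; exact ⟨⟨k, hk⟩, Fin.ext rfl⟩
    · rintro ⟨a, rfl⟩; exact a.2
  rw [hmap, Finset.sum_map]
  rfl

lemma sum_filter_mid (i j N : ℕ) (hN : i + j ≤ N) (f : Fin N → ℝ) :
    ∑ k ∈ univ.filter (fun k : Fin N => i ≤ (k:ℕ) ∧ (k:ℕ) < i + j), f k
      = ∑ k : Fin j, f ⟨i + k, by omega⟩ := by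
  have hmap : univ.filter (fun k : Fin N => i ≤ (k:ℕ) ∧ (k:ℕ) < i + j)
      = (univ : Finset (Fin j)).map ⟨fun k : Fin j => (⟨i + k, by omega⟩ : Fin N),
          fun a b hab => by simp only [Fin.ext_iff] at hab ⊢; omega⟩ := by
    ext k
    simp only [mem_filter, mem_univ, true_and, Finset.mem_map, Function.Embedding.coeFn_mk]
    constructor
    · rintro ⟨h1, h2⟩; exact ⟨⟨(k:ℕ) - i, by omega⟩, Fin.ext (by show i + ((k:ℕ) - i) = k; omega)⟩
    · rintro ⟨a, rfl⟩; show i ≤ i + (a:ℕ) ∧ i + (a:ℕ) < i + j; omega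
  rw [hmap, Finset.sum_map]
  rfl

lemma filter_last (N : ℕ) (hN : 0 < N) :
    univ.filter (fun k : Fin N => (k:ℕ) = N - 1) = {(⟨N - 1, by omega⟩ : Fin N)} := by
  ext k
  simp [Fin.ext_iff]

lemma tc_eq (N : ℕ) (hN : 0 < N) (p : EuclideanSpace ℝ (Fin N)) :
    tc N p = p ⟨N - 1, by omega⟩ := by
  rw [tc, filter_last N hN, Finset.sum_singleton]

lemma nsq_split (i j N : ℕ) (h : i + j < N) (p : EuclideanSpace ℝ (Fin N)) :
    nsq N p = su i N p + sv i j N p + sw i j N p + (tc N p)^2 := by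
  have h1 := Finset.sum_filter_add_sum_filter_not (univ : Finset (Fin N))
    (fun k : Fin N => (k:ℕ) < i) (fun k => (p k)^2)
  have h2 := Finset.sum_filter_add_sum_filter_not
    (univ.filter (fun k : Fin N => ¬ (k:ℕ) < i))
    (fun k : Fin N => (k:ℕ) < i + j) (fun k => (p k)^2)
  have h3 := Finset.sum_filter_add_sum_filter_not
    ((univ.filter (fun k : Fin N => ¬ (k:ℕ) < i)).filter (fun k : Fin N => ¬ (k:ℕ) < i + j))
    (fun k : Fin N => (k:ℕ) < N - 1) (fun k => (p k)^2)
  have e2 : (univ.filter (fun k : Fin N => ¬ (k:ℕ) < i)).filter (fun k : Fin N => (k:ℕ) < i + j)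
      = univ.filter (fun k : Fin N => i ≤ (k:ℕ) ∧ (k:ℕ) < i + j) := by
    ext k; simp only [mem_filter, mem_univ, true_and, not_lt]; try omega
  have e3 : ((univ.filter (fun k : Fin N => ¬ (k:ℕ) < i)).filter
        (fun k : Fin N => ¬ (k:ℕ) < i + j)).filter (fun k : Fin N => (k:ℕ) < N - 1)
      = univ.filter (fun k : Fin N => i + j ≤ (k:ℕ) ∧ (k:ℕ) < N - 1) := by
    ext k; simp only [mem_filter, mem_univ, true_and, not_lt]; try omega
  have e4 : ((univ.filter (fun k : Fin N => ¬ (k:ℕ) < i)).filter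
        (fun k : Fin N => ¬ (k:ℕ) < i + j)).filter (fun k : Fin N => ¬ (k:ℕ) < N - 1)
      = univ.filter (fun k : Fin N => (k:ℕ) = N - 1) := by
    ext k
    have := k.2
    simp only [mem_filter, mem_univ, true_and, not_lt]; try omega
  have e5 : ∑ k ∈ univ.filter (fun k : Fin N => (k:ℕ) = N - 1), (p k)^2 = (tc N p)^2 := by
    rw [tc, filter_last N (by omega), Finset.sum_singleton, Finset.sum_singleton]
  rw [e2] at h2
  rw [e3, e4, e5] at h3
  rw [nsq, ← h1, ← h2, ← h3, su, sv, sw]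
  ring


lemma stdEmb_apply (i j N : ℕ) (x : EuclideanSpace ℝ (Fin i)) (y : EuclideanSpace ℝ (Fin j))
    (k : Fin N) :
    stdEmb i j N x y k =
      if h : (k : ℕ) < i then x ⟨k, h⟩
      else if h2 : (k : ℕ) < i + j then y ⟨(k : ℕ) - i, by omega⟩
      else if (k : ℕ) = N - 1 then Real.sqrt (1 - ‖x‖ ^ 2 - ‖y‖ ^ 2) else 0 :=
  rfl

lemma norm_sq_eq (N : ℕ) (p : EuclideanSpace ℝ (Fin N)) : ‖p‖^2 = nsq N p := by
  rw [EuclideanSpace.norm_eq, Real.sq_sqrt (by positivity)]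
  simp [nsq, sq_abs]

lemma nsq_nonneg (N : ℕ) (p : EuclideanSpace ℝ (Fin N)) : 0 ≤ nsq N p :=
  Finset.sum_nonneg fun k _ => sq_nonneg _

lemma su_nonneg (i N : ℕ) (p : EuclideanSpace ℝ (Fin N)) : 0 ≤ su i N p :=
  Finset.sum_nonneg fun k _ => sq_nonneg _
lemma sv_nonneg (i j N : ℕ) (p : EuclideanSpace ℝ (Fin N)) : 0 ≤ sv i j N p :=
  Finset.sum_nonneg fun k _ => sq_nonneg _
lemma sw_nonneg (i j N : ℕ) (p : EuclideanSpace ℝ (Fin N)) : 0 ≤ sw i j N p :=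
  Finset.sum_nonneg fun k _ => sq_nonneg _

lemma su_stdEmb (i j N : ℕ) (h : i + j < N) (x : EuclideanSpace ℝ (Fin i))
    (y : EuclideanSpace ℝ (Fin j)) : su i N (stdEmb i j N x y) = ‖x‖^2 := by
  rw [su, norm_sq_eq, nsq]
  rw [sum_filter_lt i N (by omega) (fun k => (stdEmb i j N x y k)^2)]
  apply Finset.sum_congr rfl
  intro k _
  rw [stdEmb_apply, dif_pos (by simpa using k.2)]

lemma sv_stdEmb (i j N : ℕ) (h : i + j < N) (x : EuclideanSpace ℝ (Fin i))
    (y : EuclideanSpace ℝ (Fin j)) : sv i j N (stdEmb i j N x y) = ‖y‖^2 := by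
  rw [sv, norm_sq_eq, nsq]
  rw [sum_filter_mid i j N (by omega) (fun k => (stdEmb i j N x y k)^2)]
  apply Finset.sum_congr rfl
  intro k _
  rw [stdEmb_apply, dif_neg (by simp), dif_pos (by simp [k.2])]
  exact congrArg (· ^ 2) (congrArg _ (Fin.ext (by simp)))

lemma sw_stdEmb (i j N : ℕ) (h : i + j < N) (x : EuclideanSpace ℝ (Fin i))
    (y : EuclideanSpace ℝ (Fin j)) : sw i j N (stdEmb i j N x y) = 0 := by
  rw [sw]
  apply Finset.sum_eq_zero
  intro k hk
  simp only [mem_filter, mem_univ, true_and] at hk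
  rw [stdEmb_apply, dif_neg (by omega), dif_neg (by omega), if_neg (by omega)]
  simp

lemma tc_stdEmb (i j N : ℕ) (h : i + j < N) (x : EuclideanSpace ℝ (Fin i))
    (y : EuclideanSpace ℝ (Fin j)) :
    tc N (stdEmb i j N x y) = Real.sqrt (1 - ‖x‖ ^ 2 - ‖y‖ ^ 2) := by
  rw [tc_eq N (by omega), stdEmb_apply, dif_neg (by simp; omega), dif_neg (by simp; omega),
    if_pos (by simp)]

lemma nsq_stdEmb (i j N : ℕ) (h : i + j < N) (x : EuclideanSpace ℝ (Fin i))
    (y : EuclideanSpace ℝ (Fin j)) (hxy : ‖x‖^2 + ‖y‖^2 ≤ 1) :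
    nsq N (stdEmb i j N x y) = 1 := by
  rw [nsq_split i j N h, su_stdEmb i j N h, sv_stdEmb i j N h, sw_stdEmb i j N h,
    tc_stdEmb i j N h, Real.sq_sqrt (by linarith)]
  ring

lemma normx_sq_le (i : ℕ) (x : EuclideanSpace ℝ (Fin i)) (hx : ‖x‖ ≤ 1/2) :
    ‖x‖^2 ≤ 1/4 := by
  nlinarith [norm_nonneg x]

lemma th_stdEmb (i j N : ℕ) (h : i + j < N) (x : EuclideanSpace ℝ (Fin i))
    (y : EuclideanSpace ℝ (Fin j)) (hx : ‖x‖ ≤ 1/2) (hy : ‖y‖ ≤ 1/2) :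
    th i j N (stdEmb i j N x y) = 0 := by
  have hx2 := normx_sq_le i x hx
  have hy2 := normx_sq_le j y hy
  have hs : (7:ℝ)/10 ≤ Real.sqrt (1 - ‖x‖ ^ 2 - ‖y‖ ^ 2) := by
    rw [show (7:ℝ)/10 = Real.sqrt ((7/10)^2) from (Real.sqrt_sq (by norm_num)).symm]
    apply Real.sqrt_le_sqrt
    nlinarith
  rw [th, nsq_stdEmb i j N h x y (by linarith), su_stdEmb i j N h, sv_stdEmb i j N h,
    sw_stdEmb i j N h, tc_stdEmb i j N h]
  rw [max_eq_right (by linarith), max_eq_right (by linarith), max_eq_right (by linarith)]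
  ring


lemma th_nonneg (i j N : ℕ) (p : EuclideanSpace ℝ (Fin N)) (hp : nsq N p ≤ 1) :
    0 ≤ th i j N p := by
  have := sw_nonneg i j N p
  have h1 : (0:ℝ) ≤ max (su i N p - 1/4) 0 := le_max_right _ _
  have h2 : (0:ℝ) ≤ max (sv i j N p - 1/4) 0 := le_max_right _ _
  have h3 : (0:ℝ) ≤ max (7/10 - tc N p) 0 := le_max_right _ _
  rw [th]; linarith

lemma ph_nonneg (i j N : ℕ) (p : EuclideanSpace ℝ (Fin N)) (hp : nsq N p ≤ 1) :
    0 ≤ ph i j N p := le_min (by norm_num) (by linarith [th_nonneg i j N p hp])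

lemma ph_le_one (i j N : ℕ) (p : EuclideanSpace ℝ (Fin N)) : ph i j N p ≤ 1 := min_le_left _ _

lemma ph_eq_one (i j N : ℕ) (p : EuclideanSpace ℝ (Fin N)) (hp : nsq N p ≤ 1)
    (ht : tc N p ≤ 3/5) : ph i j N p = 1 := by
  apply min_eq_left
  have := sw_nonneg i j N p
  have h1 : (0:ℝ) ≤ max (su i N p - 1/4) 0 := le_max_right _ _
  have h2 : (0:ℝ) ≤ max (sv i j N p - 1/4) 0 := le_max_right _ _
  have h3 : (7:ℝ)/10 - tc N p ≤ max (7/10 - tc N p) 0 := le_max_left _ _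
  rw [th]; nlinarith

lemma ph_eq_zero_iff (i j N : ℕ) (p : EuclideanSpace ℝ (Fin N)) (hp : nsq N p ≤ 1) :
    ph i j N p = 0 ↔ th i j N p = 0 := by
  have h0 := th_nonneg i j N p hp
  constructor
  · intro hph
    rcases min_cases 1 (10 * th i j N p) with ⟨he, _⟩ | ⟨he, _⟩ <;> rw [ph] at hph <;>
      rw [he] at hph <;> linarith
  · intro hth; rw [ph, hth]; simp

lemma Tt_eq_of_ph_one (i j N : ℕ) (p : EuclideanSpace ℝ (Fin N)) (hph : ph i j N p = 1) :
    Tt i j N p = tc N p := by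
  rw [Tt, hph]
  rw [show (1:ℝ) - 1^2 = 0 by norm_num, zero_mul, add_zero, Real.sqrt_sq (le_max_right _ _)]
  rcases le_total (tc N p) 0 with h | h
  · rw [max_eq_right h, min_eq_left h, zero_add]
  · rw [max_eq_left h, min_eq_right h, add_zero]

lemma G_eq_self (i j N : ℕ) (p : EuclideanSpace ℝ (Fin N)) (hph : ph i j N p = 1) (k : Fin N) :
    G i j N p k = p k := by
  rw [G_apply]
  split_ifs with h1 h2 h3
  · rfl
  · rw [hph, one_mul]
  · rw [Tt_eq_of_ph_one i j N p hph, tc_eq N k.pos]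
    exact congrArg _ (Fin.ext (by simp only [Fin.val_mk]; omega))
  · rfl

-- components of G
lemma su_G (i j N : ℕ) (p : EuclideanSpace ℝ (Fin N)) : su i N (G i j N p) = su i N p := by
  apply Finset.sum_congr rfl
  intro k hk
  simp only [mem_filter, mem_univ, true_and] at hk
  rw [G_apply, if_pos hk]

lemma sv_G (i j N : ℕ) (p : EuclideanSpace ℝ (Fin N)) :
    sv i j N (G i j N p) = (ph i j N p)^2 * sv i j N p := by
  rw [sv, sv, Finset.mul_sum]
  apply Finset.sum_congr rfl
  intro k hk
  simp only [mem_filter, mem_univ, true_and] at hk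
  rw [G_apply, if_neg (by omega), if_pos hk.2]
  ring

lemma sw_G (i j N : ℕ) (p : EuclideanSpace ℝ (Fin N)) : sw i j N (G i j N p) = sw i j N p := by
  apply Finset.sum_congr rfl
  intro k hk
  simp only [mem_filter, mem_univ, true_and] at hk
  rw [G_apply, if_neg (by omega), if_neg (by omega), if_neg (by omega)]

lemma tc_G (i j N : ℕ) (h : i + j < N) (p : EuclideanSpace ℝ (Fin N)) :
    tc N (G i j N p) = Tt i j N p := by
  rw [tc_eq N (by omega), G_apply, if_neg (by simp; omega), if_neg (by simp; omega),
    if_pos (by simp)]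

lemma nsq_G (i j N : ℕ) (h : i + j < N) (p : EuclideanSpace ℝ (Fin N)) (hp : nsq N p ≤ 1) :
    nsq N (G i j N p) = nsq N p := by
  rcases lt_or_ge (tc N p) 0 with ht | ht
  · have hph : ph i j N p = 1 := ph_eq_one i j N p hp (by linarith)
    rw [nsq, nsq]
    exact Finset.sum_congr rfl fun k _ => by rw [G_eq_self i j N p hph]
  · have hph0 := ph_nonneg i j N p hp
    have hph1 := ph_le_one i j N p
    have hsv := sv_nonneg i j N p
    have hTt : Tt i j N p = Real.sqrt ((tc N p)^2 + (1 - (ph i j N p)^2) * sv i j N p) := by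
      rw [Tt, max_eq_left ht, min_eq_right ht, add_zero]
    have h1mp : (0:ℝ) ≤ 1 - (ph i j N p)^2 := by nlinarith
    have hTt2 : (Tt i j N p)^2 = (tc N p)^2 + (1 - (ph i j N p)^2) * sv i j N p := by
      rw [hTt, Real.sq_sqrt (by nlinarith [mul_nonneg h1mp hsv, sq_nonneg (tc N p)])]
    rw [nsq_split i j N h, nsq_split i j N h, su_G, sv_G, sw_G, tc_G i j N h, hTt2]
    ring

lemma G_stdEmb (i j N : ℕ) (h : i + j < N) (x : EuclideanSpace ℝ (Fin i))
    (y : EuclideanSpace ℝ (Fin j)) (hx : ‖x‖ ≤ 1/2) (hy : ‖y‖ ≤ 1/2) (k : Fin N) :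
    G i j N (stdEmb i j N x y) k = stdEmb i j N x (0 : EuclideanSpace ℝ (Fin j)) k := by
  have hx2 := normx_sq_le i x hx
  have hy2 := normx_sq_le j y hy
  have hth := th_stdEmb i j N h x y hx hy
  have hph : ph i j N (stdEmb i j N x y) = 0 := by rw [ph, hth]; simp
  have ht0 : 0 ≤ Real.sqrt (1 - ‖x‖ ^ 2 - ‖y‖ ^ 2) := Real.sqrt_nonneg _
  rw [G_apply, stdEmb_apply]
  split_ifs with h1 h2 h3
  · rw [stdEmb_apply, dif_pos h1]
  · rw [stdEmb_apply, dif_neg h1, dif_pos h2, hph, zero_mul]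
    simp
  · rw [stdEmb_apply, dif_neg h1, dif_neg h2, if_pos h3]
    rw [Tt, hph, tc_stdEmb i j N h, max_eq_left ht0, min_eq_right ht0, add_zero]
    rw [sv_stdEmb i j N h]
    have hn0 : ‖(0 : EuclideanSpace ℝ (Fin j))‖ = 0 := norm_zero
    rw [hn0]
    rw [Real.sq_sqrt (by nlinarith)]
    congr 1
    ring
  · rw [stdEmb_apply, dif_neg h1, dif_neg h2, if_neg h3]


def xOf (i j N : ℕ) (h : i + j < N) (p : EuclideanSpace ℝ (Fin N)) :
    EuclideanSpace ℝ (Fin i) :=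
  (WithLp.equiv 2 (Fin i → ℝ)).symm fun k => p ⟨k, by omega⟩

def yOf (i j N : ℕ) (h : i + j < N) (p : EuclideanSpace ℝ (Fin N)) :
    EuclideanSpace ℝ (Fin j) :=
  (WithLp.equiv 2 (Fin j → ℝ)).symm fun k => p ⟨i + k, by omega⟩

lemma xOf_apply (i j N : ℕ) (h : i + j < N) (p : EuclideanSpace ℝ (Fin N)) (k : Fin i) :
    xOf i j N h p k = p ⟨k, by omega⟩ := rfl

lemma yOf_apply (i j N : ℕ) (h : i + j < N) (p : EuclideanSpace ℝ (Fin N)) (k : Fin j) :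
    yOf i j N h p k = p ⟨i + k, by omega⟩ := rfl

lemma norm_xOf_sq (i j N : ℕ) (h : i + j < N) (p : EuclideanSpace ℝ (Fin N)) :
    ‖xOf i j N h p‖^2 = su i N p := by
  rw [norm_sq_eq, nsq, su, sum_filter_lt i N (by omega) (fun k => (p k)^2)]
  exact Finset.sum_congr rfl fun k _ => by rw [xOf_apply]

lemma norm_yOf_sq (i j N : ℕ) (h : i + j < N) (p : EuclideanSpace ℝ (Fin N)) :
    ‖yOf i j N h p‖^2 = sv i j N p := by
  rw [norm_sq_eq, nsq, sv, sum_filter_mid i j N (by omega) (fun k => (p k)^2)]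
  exact Finset.sum_congr rfl fun k _ => by rw [yOf_apply]

lemma th_zero_parts (i j N : ℕ) (p : EuclideanSpace ℝ (Fin N)) (hp : nsq N p ≤ 1)
    (hth : th i j N p = 0) :
    nsq N p = 1 ∧ sw i j N p = 0 ∧ su i N p ≤ 1/4 ∧ sv i j N p ≤ 1/4 ∧ 7/10 ≤ tc N p := by
  have hB := sw_nonneg i j N p
  have hC : (0:ℝ) ≤ max (su i N p - 1/4) 0 := le_max_right _ _
  have hD : (0:ℝ) ≤ max (sv i j N p - 1/4) 0 := le_max_right _ _
  have hE : (0:ℝ) ≤ max (7/10 - tc N p) 0 := le_max_right _ _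
  rw [th] at hth
  refine ⟨by linarith, by linarith, ?_, ?_, ?_⟩
  · have : max (su i N p - 1/4) 0 = 0 := by linarith
    have := max_eq_right_iff.mp this; linarith
  · have : max (sv i j N p - 1/4) 0 = 0 := by linarith
    have := max_eq_right_iff.mp this; linarith
  · have : max (7/10 - tc N p) 0 = 0 := by linarith
    have := max_eq_right_iff.mp this; linarith

lemma th_zero_repr (i j N : ℕ) (h : i + j < N) (p : EuclideanSpace ℝ (Fin N))
    (hp : nsq N p ≤ 1) (hth : th i j N p = 0) :
    ‖xOf i j N h p‖ ≤ 1/2 ∧ ‖yOf i j N h p‖ ≤ 1/2 ∧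
      ∀ k, p k = stdEmb i j N (xOf i j N h p) (yOf i j N h p) k := by
  obtain ⟨h1, h2, h3, h4, h5⟩ := th_zero_parts i j N p hp hth
  have hx : ‖xOf i j N h p‖ ≤ 1/2 := by
    nlinarith [norm_xOf_sq i j N h p, norm_nonneg (xOf i j N h p)]
  have hy : ‖yOf i j N h p‖ ≤ 1/2 := by
    nlinarith [norm_yOf_sq i j N h p, norm_nonneg (yOf i j N h p)]
  refine ⟨hx, hy, fun k => ?_⟩
  rw [stdEmb_apply]
  split_ifs with c1 c2 c3
  · rw [xOf_apply]
  · rw [yOf_apply]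
    exact congrArg _ (Fin.ext (by simp only [Fin.val_mk]; omega))
  · rw [norm_xOf_sq i j N h p, norm_yOf_sq i j N h p]
    have hsplit := nsq_split i j N h p
    have : 1 - su i N p - sv i j N p = (tc N p)^2 := by rw [← h1, hsplit, h2]; ring
    rw [this, Real.sqrt_sq (by linarith)]
    rw [tc_eq N (by omega)]
    exact congrArg _ (Fin.ext (by simp only [Fin.val_mk]; omega))
  · have hk : k ∈ univ.filter (fun k : Fin N => i + j ≤ (k:ℕ) ∧ (k:ℕ) < N - 1) := by
      simp only [mem_filter, mem_univ, true_and]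
      have := k.2
      omega
    have := (Finset.sum_eq_zero_iff_of_nonneg (fun k _ => sq_nonneg (p k))).mp h2 k hk
    exact pow_eq_zero_iff (by norm_num) |>.mp this


lemma le_of_sq_le (a b : ℝ) (ha : 0 ≤ a) (hb : 0 ≤ b) (hab : a^2 ≤ b^2) : a ≤ b := by
  nlinarith [sq_nonneg (a - b), sq_nonneg (a + b)]

lemma eq_of_sq_eq (a b : ℝ) (ha : 0 ≤ a) (hb : 0 ≤ b) (hab : a^2 = b^2) : a = b :=
  le_antisymm (le_of_sq_le a b ha hb (le_of_eq hab)) (le_of_sq_le b a hb ha (ge_of_eq hab))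

lemma G_inj (i j N : ℕ) (h : i + j < N) (p q : EuclideanSpace ℝ (Fin N))
    (hp : nsq N p ≤ 1) (hq : nsq N q ≤ 1) (hG : ∀ k, G i j N p k = G i j N q k) :
    (∀ k, p k = q k) ∨ (th i j N p = 0 ∧ th i j N q = 0) := by
  have hu : ∀ k : Fin N, (k:ℕ) < i → p k = q k := by
    intro k hk
    have := hG k
    rwa [G_apply, G_apply, if_pos hk, if_pos hk] at this
  have hv : ∀ k : Fin N, i ≤ (k:ℕ) → (k:ℕ) < i + j →
      ph i j N p * p k = ph i j N q * q k := by
    intro k hk1 hk2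
    have := hG k
    rwa [G_apply, G_apply, if_neg (not_lt.mpr hk1), if_neg (not_lt.mpr hk1), if_pos hk2,
      if_pos hk2] at this
  have hw : ∀ k : Fin N, i + j ≤ (k:ℕ) → (k:ℕ) < N - 1 → p k = q k := by
    intro k hk1 hk2
    have c1 : ¬((k:ℕ) < i) := by omega
    have c2 : ¬((k:ℕ) < i + j) := by omega
    have c3 : ¬((k:ℕ) = N - 1) := by omega
    have := hG k
    rwa [G_apply, G_apply, if_neg c1, if_neg c1, if_neg c2, if_neg c2, if_neg c3,
      if_neg c3] at this
  have hTt : Tt i j N p = Tt i j N q := by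
    rw [← tc_G i j N h p, ← tc_G i j N h q]
    exact Finset.sum_congr rfl fun k _ => hG k
  have hsu : su i N p = su i N q := by
    apply Finset.sum_congr rfl
    intro k hk
    simp only [mem_filter, mem_univ, true_and] at hk
    rw [hu k hk]
  have hsw : sw i j N p = sw i j N q := by
    apply Finset.sum_congr rfl
    intro k hk
    simp only [mem_filter, mem_univ, true_and] at hk
    rw [hw k hk.1 hk.2]
  have hsv2 : (ph i j N p)^2 * sv i j N p = (ph i j N q)^2 * sv i j N q := by
    rw [← sv_G, ← sv_G]
    exact Finset.sum_congr rfl fun k _ => by rw [hG k]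
  have hnsq : nsq N p = nsq N q := by
    rw [← nsq_G i j N h p hp, ← nsq_G i j N h q hq]
    exact Finset.sum_congr rfl fun k _ => by rw [hG k]
  have hS : sv i j N p + (tc N p)^2 = sv i j N q + (tc N q)^2 := by
    have e1 := nsq_split i j N h p
    have e2 := nsq_split i j N h q
    linarith
  -- rule out negative tc on either side
  rcases lt_or_ge (tc N p) 0 with htp | htp
  · have hphp : ph i j N p = 1 := ph_eq_one i j N p hp (by linarith)
    have hTtp : Tt i j N p = tc N p := Tt_eq_of_ph_one i j N p hphp
    have htq : tc N q < 0 := by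
      by_contra hc
      push_neg at hc
      have : 0 ≤ Tt i j N q := by
        rw [Tt, min_eq_right hc, add_zero]
        exact Real.sqrt_nonneg _
      have hx : Tt i j N q < 0 := by rw [← hTt, hTtp]; exact htp
      linarith
    have hphq : ph i j N q = 1 := ph_eq_one i j N q hq (by linarith)
    left
    intro k
    rw [← G_eq_self i j N p hphp k, ← G_eq_self i j N q hphq k, hG k]
  rcases lt_or_ge (tc N q) 0 with htq | htq
  · exfalso
    have hphq : ph i j N q = 1 := ph_eq_one i j N q hq (by linarith)
    have hTtq : Tt i j N q = tc N q := Tt_eq_of_ph_one i j N q hphq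
    have : 0 ≤ Tt i j N p := by
      rw [Tt, min_eq_right htp, add_zero]
      exact Real.sqrt_nonneg _
    have hx : 0 ≤ Tt i j N q := by rw [← hTt]; exact this
    linarith
  -- both tc nonneg
  have hphp0 := ph_nonneg i j N p hp
  have hphq0 := ph_nonneg i j N q hq
  have hsvp0 := sv_nonneg i j N p
  have hsvq0 := sv_nonneg i j N q
  -- monotonicity: sv r ≤ sv s implies th r ≤ th s (under shared data)
  have tmono : ∀ r s : EuclideanSpace ℝ (Fin N), su i N r = su i N s → sw i j N r = sw i j N s →
      nsq N r = nsq N s → 0 ≤ tc N r → 0 ≤ tc N s →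
      sv i j N r + (tc N r)^2 = sv i j N s + (tc N s)^2 → sv i j N r ≤ sv i j N s →
      th i j N r ≤ th i j N s := by
    intro r s e1 e2 e3 e4 e5 e6 e7
    have htcs : tc N s ≤ tc N r := by
      apply le_of_sq_le _ _ e5 e4
      linarith
    rw [th, th, e1, e2, e3]
    have m1 : max (sv i j N r - 1/4) 0 ≤ max (sv i j N s - 1/4) 0 :=
      max_le_max (by linarith) le_rfl
    have m2 : max (7/10 - tc N r) 0 ≤ max (7/10 - tc N s) 0 :=
      max_le_max (by linarith) le_rfl
    linarith
  -- core: sv p ≤ sv q (or reverse) gives the dichotomy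
  have core : ∀ r s : EuclideanSpace ℝ (Fin N), nsq N r ≤ 1 → nsq N s ≤ 1 →
      su i N r = su i N s → sw i j N r = sw i j N s → nsq N r = nsq N s →
      0 ≤ tc N r → 0 ≤ tc N s →
      sv i j N r + (tc N r)^2 = sv i j N s + (tc N s)^2 →
      (ph i j N r)^2 * sv i j N r = (ph i j N s)^2 * sv i j N s →
      sv i j N r ≤ sv i j N s → ph i j N r ≤ ph i j N s →
      (th i j N r = 0 ∧ th i j N s = 0) ∨ sv i j N r = sv i j N s := by
    intro r s hr hs e1 e2 e3 e4 e5 e6 e7 e8 e9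
    have hphr0 := ph_nonneg i j N r hr
    have hphs0 := ph_nonneg i j N s hs
    have hsvr0 := sv_nonneg i j N r
    have hsvs0 := sv_nonneg i j N s
    rcases eq_or_lt_of_le e8 with heq | hlt
    · right; exact heq
    by_cases hs0 : ph i j N s = 0
    · -- th s = 0
      have hths : th i j N s = 0 := (ph_eq_zero_iff i j N s hs).mp hs0
      have hzero : (ph i j N r)^2 * sv i j N r = 0 := by rw [e7, hs0]; ring
      rcases mul_eq_zero.mp hzero with hr0 | hsvr
      · have : ph i j N r = 0 := pow_eq_zero_iff (by norm_num) |>.mp hr0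
        exact Or.inl ⟨(ph_eq_zero_iff i j N r hr).mp this, hths⟩
      · -- sv r = 0, deduce th r = 0
        obtain ⟨hs1, hs2, hs3, hs4, hs5⟩ := th_zero_parts i j N s hs hths
        have htrs : tc N s ≤ tc N r := by
          apply le_of_sq_le _ _ e5 e4
          nlinarith
        have htr : 7/10 ≤ tc N r := by linarith
        left
        refine ⟨?_, hths⟩
        rw [th, e3, e1, e2, hs1, hs2, hsvr]
        rw [max_eq_right (by linarith), max_eq_right (by norm_num), max_eq_right (by linarith)]
        ring
    · exfalso
      have hphs : 0 < ph i j N s := lt_of_le_of_ne hphs0 (Ne.symm hs0)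
      have : (ph i j N r)^2 * sv i j N r < (ph i j N s)^2 * sv i j N s := by
        have h1 : (ph i j N r)^2 ≤ (ph i j N s)^2 := by nlinarith [e9, hphr0]
        have h2 : (ph i j N s)^2 * sv i j N r < (ph i j N s)^2 * sv i j N s :=
          mul_lt_mul_of_pos_left hlt (pow_pos hphs 2)
        nlinarith
      rw [e7] at this
      exact lt_irrefl _ this
  rcases le_total (sv i j N p) (sv i j N q) with hle | hle
  · have hphle : ph i j N p ≤ ph i j N q :=
      min_le_min le_rfl (by linarith [tmono p q hsu hsw hnsq htp htq hS hle])
    rcases core p q hp hq hsu hsw hnsq htp htq hS hsv2 hle hphle with hz | hsveq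
    · exact Or.inr hz
    · -- sv equal: finish
      have htpq : tc N p = tc N q := by
        apply eq_of_sq_eq _ _ htp htq
        linarith
      have hthpq : th i j N p = th i j N q := by rw [th, th, hsu, hsw, hnsq, hsveq, htpq]
      by_cases hp0 : ph i j N p = 0
      · have h1 := (ph_eq_zero_iff i j N p hp).mp hp0
        exact Or.inr ⟨h1, by rw [← hthpq]; exact h1⟩
      · left
        intro k
        have hk := k.2
        have hphp_eq : ph i j N p = ph i j N q := by rw [ph, ph, hthpq]
        rcases lt_or_ge (k:ℕ) i with c1 | c1
        · exact hu k c1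
        rcases lt_or_ge (k:ℕ) (i+j) with c2 | c2
        · have := hv k c1 c2
          rw [← hphp_eq] at this
          exact mul_left_cancel₀ hp0 this
        rcases lt_or_ge (k:ℕ) (N-1) with c3 | c3
        · exact hw k c2 c3
        · have hkN : (⟨N - 1, by omega⟩ : Fin N) = k := Fin.ext (by simp only [Fin.val_mk]; omega)
          rw [← hkN, ← tc_eq N (by omega) p, ← tc_eq N (by omega) q, htpq]
  · have hphle : ph i j N q ≤ ph i j N p :=
      min_le_min le_rfl (by linarith [tmono q p hsu.symm hsw.symm hnsq.symm htq htp hS.symm hle])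
    rcases core q p hq hp hsu.symm hsw.symm hnsq.symm htq htp hS.symm hsv2.symm hle hphle
      with hz | hsveq
    · exact Or.inr ⟨hz.2, hz.1⟩
    · have hsveq' := hsveq.symm
      have htpq : tc N p = tc N q := by
        apply eq_of_sq_eq _ _ htp htq
        linarith
      have hthpq : th i j N p = th i j N q := by rw [th, th, hsu, hsw, hnsq, hsveq', htpq]
      by_cases hp0 : ph i j N p = 0
      · have h1 := (ph_eq_zero_iff i j N p hp).mp hp0
        exact Or.inr ⟨h1, by rw [← hthpq]; exact h1⟩
      · left
        intro k
        have hk := k.2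
        have hphp_eq : ph i j N p = ph i j N q := by rw [ph, ph, hthpq]
        rcases lt_or_ge (k:ℕ) i with c1 | c1
        · exact hu k c1
        rcases lt_or_ge (k:ℕ) (i+j) with c2 | c2
        · have := hv k c1 c2
          rw [← hphp_eq] at this
          exact mul_left_cancel₀ hp0 this
        rcases lt_or_ge (k:ℕ) (N-1) with c3 | c3
        · exact hw k c2 c3
        · have hkN : (⟨N - 1, by omega⟩ : Fin N) = k := Fin.ext (by simp only [Fin.val_mk]; omega)
          rw [← hkN, ← tc_eq N (by omega) p, ← tc_eq N (by omega) q, htpq]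


lemma G_surj (i j N : ℕ) (h : i + j < N) (q : EuclideanSpace ℝ (Fin N)) (hq : nsq N q ≤ 1) :
    ∃ p : EuclideanSpace ℝ (Fin N), nsq N p ≤ 1 ∧ ∀ k, G i j N p k = q k := by
  by_cases hsv : sv i j N q = 0
  · refine ⟨q, hq, fun k => ?_⟩
    rw [G_apply]
    split_ifs with c1 c2 c3
    · rfl
    · have hk : k ∈ univ.filter (fun k : Fin N => i ≤ (k:ℕ) ∧ (k:ℕ) < i + j) := by
        simp only [mem_filter, mem_univ, true_and]; omega
      have hq0 : q k = 0 := by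
        have := (Finset.sum_eq_zero_iff_of_nonneg (fun k _ => sq_nonneg (q k))).mp hsv k hk
        exact pow_eq_zero_iff (by norm_num) |>.mp this
      rw [hq0, mul_zero]
    · rw [Tt, hsv, mul_zero, add_zero, Real.sqrt_sq (le_max_right _ _)]
      rw [tc_eq N (by omega)]
      have : max (q ⟨N-1, by omega⟩) 0 + min (q ⟨N-1, by omega⟩) 0 = q ⟨N-1, by omega⟩ := by
        rcases le_total (q ⟨N-1, by omega⟩) 0 with hc | hc
        · rw [max_eq_right hc, min_eq_left hc, zero_add]
        · rw [max_eq_left hc, min_eq_right hc, add_zero]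
      rw [this]
      exact congrArg _ (Fin.ext (by simp only [Fin.val_mk]; omega))
    · rfl
  rcases lt_or_ge (tc N q) 0 with htq | htq
  · exact ⟨q, hq, fun k => G_eq_self i j N q (ph_eq_one i j N q hq (by linarith)) k⟩
  -- main case
  have hsvq : 0 < sv i j N q := lt_of_le_of_ne (sv_nonneg i j N q) (Ne.symm hsv)
  obtain ⟨S, hSdef⟩ : ∃ S : ℝ, S = sv i j N q + (tc N q)^2 := ⟨_, rfl⟩
  obtain ⟨c, hcdef⟩ : ∃ c : ℝ,
    c = (1 - nsq N q) + sw i j N q + max (su i N q - 1/4) 0 := ⟨_, rfl⟩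
  have hc0 : 0 ≤ c := by
    rw [hcdef]
    linarith [sw_nonneg i j N q, le_max_right (su i N q - 1/4) (0:ℝ), hq]
  obtain ⟨F, hFdef⟩ : ∃ F : ℝ → ℝ, F = fun ξ =>
      (min 1 (10 * (c + max (ξ - 1/4) 0 + max (7/10 - Real.sqrt (S - ξ)) 0)))^2 * ξ := ⟨_, rfl⟩
  have hFcont : Continuous F := by
    rw [hFdef]
    apply Continuous.mul ?_ continuous_id
    apply Continuous.pow
    apply Continuous.min continuous_const
    apply Continuous.mul continuous_const
    apply Continuous.add
    · apply Continuous.add continuous_const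
      exact Continuous.max (continuous_id.sub continuous_const) continuous_const
    · apply Continuous.max ?_ continuous_const
      exact continuous_const.sub (Real.continuous_sqrt.comp (continuous_const.sub continuous_id))
  have hS0 : (0:ℝ) ≤ S := by rw [hSdef]; positivity
  have hF0 : F 0 = 0 := by rw [hFdef]; simp
  have hFS : F S = S := by
    have hge : 1 ≤ 10 * (c + max (S - 1/4) 0 + max ((7:ℝ)/10 - Real.sqrt (S - S)) 0) := by
      have e1 : max ((7:ℝ)/10 - Real.sqrt (S - S)) 0 = 7/10 := by
        rw [sub_self, Real.sqrt_zero]; norm_num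
      rw [e1]
      linarith [le_max_right (S - 1/4) (0:ℝ), hc0]
    rw [hFdef]
    show (min 1 (10 * (c + max (S - 1/4) 0 + max (7/10 - Real.sqrt (S - S)) 0)))^2 * S = S
    rw [min_eq_left hge, one_pow, one_mul]
  have hmem : sv i j N q ∈ Set.Icc (F 0) (F S) := by
    rw [hF0, hFS]
    constructor
    · exact le_of_lt hsvq
    · rw [hSdef]; nlinarith [sq_nonneg (tc N q)]
  obtain ⟨ξ, hξmem, hFξ⟩ := intermediate_value_Icc hS0 hFcont.continuousOn hmem
  obtain ⟨hξ0, hξS⟩ := hξmem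
  obtain ⟨κ, hκdef⟩ : ∃ κ : ℝ, κ = Real.sqrt (ξ / sv i j N q) := ⟨_, rfl⟩
  obtain ⟨p, hpdef⟩ : ∃ p : EuclideanSpace ℝ (Fin N),
      p = (WithLp.equiv 2 (Fin N → ℝ)).symm fun k =>
        if i ≤ (k:ℕ) ∧ (k:ℕ) < i + j then κ * q k
        else if (k:ℕ) = N - 1 then Real.sqrt (S - ξ) else q k := ⟨_, rfl⟩
  have hpk : ∀ k : Fin N, p k =
      if i ≤ (k:ℕ) ∧ (k:ℕ) < i + j then κ * q k
      else if (k:ℕ) = N - 1 then Real.sqrt (S - ξ) else q k := by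
    intro k
    rw [hpdef]
    exact rfl
  have hsu_p : su i N p = su i N q := by
    apply Finset.sum_congr rfl
    intro k hk
    simp only [mem_filter, mem_univ, true_and] at hk
    rw [hpk, if_neg (by omega), if_neg (by omega)]
  have hsv_p : sv i j N p = ξ := by
    have e : sv i j N p = κ^2 * sv i j N q := by
      rw [sv, sv, Finset.mul_sum]
      apply Finset.sum_congr rfl
      intro k hk
      simp only [mem_filter, mem_univ, true_and] at hk
      rw [hpk, if_pos hk]
      ring
    rw [e, hκdef, Real.sq_sqrt (by positivity), div_mul_cancel₀ _ (ne_of_gt hsvq)]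
  have hsw_p : sw i j N p = sw i j N q := by
    apply Finset.sum_congr rfl
    intro k hk
    simp only [mem_filter, mem_univ, true_and] at hk
    rw [hpk, if_neg (by omega), if_neg (by omega)]
  have htc_p : tc N p = Real.sqrt (S - ξ) := by
    rw [tc_eq N (by omega), hpk, if_neg (by simp only [Fin.val_mk]; omega),
      if_pos (by simp only [Fin.val_mk])]
  have hnsq_p : nsq N p = nsq N q := by
    rw [nsq_split i j N h p, nsq_split i j N h q, hsu_p, hsv_p, hsw_p, htc_p,
      Real.sq_sqrt (by linarith)]
    rw [hSdef]
    ring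
  have hth_p : th i j N p = c + max (ξ - 1/4) 0 + max (7/10 - Real.sqrt (S - ξ)) 0 := by
    rw [th, hnsq_p, hsw_p, hsu_p, hsv_p, htc_p, hcdef]
  have hph_p : ph i j N p
      = min 1 (10 * (c + max (ξ - 1/4) 0 + max (7/10 - Real.sqrt (S - ξ)) 0)) := by
    rw [ph, hth_p]
  have hkey : (ph i j N p)^2 * ξ = sv i j N q := by
    rw [hph_p, ← hFξ, hFdef]
  have hnsqle : nsq N p ≤ 1 := by rw [hnsq_p]; exact hq
  have hph0 : 0 ≤ ph i j N p := ph_nonneg i j N p hnsqle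
  have hphκ : ph i j N p * κ = 1 := by
    rw [hκdef, ← Real.sqrt_sq hph0, ← Real.sqrt_mul (sq_nonneg _)]
    rw [show (ph i j N p)^2 * (ξ / sv i j N q) = ((ph i j N p)^2 * ξ) / sv i j N q from
      (mul_div_assoc _ _ _).symm, hkey, div_self (ne_of_gt hsvq), Real.sqrt_one]
  refine ⟨p, hnsqle, fun k => ?_⟩
  rw [G_apply]
  split_ifs with c1 c2 c3
  · rw [hpk, if_neg (by omega), if_neg (by omega)]
  · rw [hpk, if_pos (by omega)]
    rw [← mul_assoc, hphκ, one_mul]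
  · rw [Tt, htc_p, hsv_p]
    rw [max_eq_left (Real.sqrt_nonneg _), min_eq_right (Real.sqrt_nonneg _), add_zero]
    rw [Real.sq_sqrt (by linarith)]
    have harg : S - ξ + (1 - (ph i j N p)^2) * ξ = (tc N q)^2 := by
      have e : (1 - (ph i j N p)^2) * ξ = ξ - sv i j N q := by rw [sub_mul, one_mul, hkey]
      rw [e, hSdef]
      ring
    rw [harg, Real.sqrt_sq htq]
    rw [tc_eq N (by omega)]
    exact congrArg _ (Fin.ext (by simp only [Fin.val_mk]; omega))
  · rw [hpk, if_neg (by omega), if_neg c3]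


lemma cont_coord (N : ℕ) (k : Fin N) :
    Continuous (fun p : EuclideanSpace ℝ (Fin N) => p k) :=
  (continuous_apply k).comp (PiLp.continuous_ofLp 2 (fun _ : Fin N => ℝ))

lemma cont_nsq (N : ℕ) : Continuous (nsq N) :=
  continuous_finset_sum _ fun k _ => (cont_coord N k).pow 2

lemma cont_su (i N : ℕ) : Continuous (su i N) :=
  continuous_finset_sum _ fun k _ => (cont_coord N k).pow 2

lemma cont_sv (i j N : ℕ) : Continuous (sv i j N) :=
  continuous_finset_sum _ fun k _ => (cont_coord N k).pow 2

lemma cont_sw (i j N : ℕ) : Continuous (sw i j N) :=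
  continuous_finset_sum _ fun k _ => (cont_coord N k).pow 2

lemma cont_tc (N : ℕ) : Continuous (tc N) :=
  continuous_finset_sum _ fun k _ => cont_coord N k

lemma cont_th (i j N : ℕ) : Continuous (th i j N) := by
  unfold th
  apply Continuous.add
  apply Continuous.add
  apply Continuous.add
  apply Continuous.add
  · exact continuous_const.sub (cont_nsq N)
  · exact cont_sw i j N
  · exact Continuous.max ((cont_su i N).sub continuous_const) continuous_const
  · exact Continuous.max ((cont_sv i j N).sub continuous_const) continuous_const
  · exact Continuous.max (continuous_const.sub (cont_tc N)) continuous_const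

lemma cont_ph (i j N : ℕ) : Continuous (ph i j N) := by
  unfold ph
  exact Continuous.min continuous_const (continuous_const.mul (cont_th i j N))

lemma cont_Tt (i j N : ℕ) : Continuous (Tt i j N) := by
  unfold Tt
  apply Continuous.add
  · apply Real.continuous_sqrt.comp
    apply Continuous.add
    · exact (Continuous.max (cont_tc N) continuous_const).pow 2
    · exact (continuous_const.sub ((cont_ph i j N).pow 2)).mul (cont_sv i j N)
  · exact Continuous.min (cont_tc N) continuous_const

lemma cont_G (i j N : ℕ) : Continuous (G i j N) := by
  unfold G
  apply (PiLp.continuous_toLp 2 (fun _ : Fin N => ℝ)).comp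
  apply continuous_pi
  intro k
  by_cases h1 : (k:ℕ) < i
  · simp only [if_pos h1]
    exact cont_coord N k
  · simp only [if_neg h1]
    by_cases h2 : (k:ℕ) < i + j
    · simp only [if_pos h2]
      exact (cont_ph i j N).mul (cont_coord N k)
    · simp only [if_neg h2]
      by_cases h3 : (k:ℕ) = N - 1
      · simp only [if_pos h3]
        exact cont_Tt i j N
      · simp only [if_neg h3]
        exact cont_coord N k

lemma norm_le_one_of_nsq (N : ℕ) (p : EuclideanSpace ℝ (Fin N)) (hp : nsq N p ≤ 1) :
    ‖p‖ ≤ 1 := by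
  nlinarith [norm_sq_eq N p, norm_nonneg p]

lemma nsq_le_one_of_norm (N : ℕ) (p : EuclideanSpace ℝ (Fin N)) (hp : ‖p‖ ≤ 1) :
    nsq N p ≤ 1 := by
  nlinarith [norm_sq_eq N p, norm_nonneg p]

end Stmt7Aux

open Stmt7Aux in
theorem stmt7'aux (i j N : ℕ) (h : i + j < N) :
    Nonempty (Quot (collapseRel i j N) ≃ₜ ↥(Metric.closedBall (0 : EuclideanSpace ℝ (Fin N)) 1)) := by
  classical
  have hmem : ∀ a : ↥(Metric.closedBall (0 : EuclideanSpace ℝ (Fin N)) 1),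
      nsq N (a : EuclideanSpace ℝ (Fin N)) ≤ 1 := by
    intro a
    exact nsq_le_one_of_norm N _ (mem_closedBall_zero_iff.mp a.2)
  have hGmem : ∀ p : EuclideanSpace ℝ (Fin N), nsq N p ≤ 1 →
      G i j N p ∈ Metric.closedBall (0 : EuclideanSpace ℝ (Fin N)) 1 := by
    intro p hp
    rw [mem_closedBall_zero_iff]
    exact norm_le_one_of_nsq N _ (by rw [nsq_G i j N h p hp]; exact hp)
  set fb : ↥(Metric.closedBall (0 : EuclideanSpace ℝ (Fin N)) 1) →
      ↥(Metric.closedBall (0 : EuclideanSpace ℝ (Fin N)) 1) :=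
    fun a => ⟨G i j N (a : EuclideanSpace ℝ (Fin N)), hGmem _ (hmem a)⟩ with hfb
  have hfb_cont : Continuous fb :=
    Continuous.subtype_mk ((cont_G i j N).comp continuous_subtype_val) _
  have hresp : ∀ a b, collapseRel i j N a b → fb a = fb b := by
    rintro a b ⟨x, y, y', hx, hy, hy', ha, hb⟩
    apply Subtype.ext
    show G i j N _ = G i j N _
    rw [ha, hb]
    exact PiLp.ext fun k => (G_stdEmb i j N h x y (by linarith) (by linarith) k).trans
      (G_stdEmb i j N h x y' (by linarith) (by linarith) k).symm
  have hsurj : Function.Surjective (Quot.lift fb hresp) := by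
    intro b
    obtain ⟨p, hp1, hp2⟩ := G_surj i j N h (b : EuclideanSpace ℝ (Fin N)) (hmem b)
    refine ⟨Quot.mk _ ⟨p, by rw [mem_closedBall_zero_iff]; exact norm_le_one_of_nsq N p hp1⟩, ?_⟩
    apply Subtype.ext
    exact PiLp.ext fun k => hp2 k
  have hinj : Function.Injective (Quot.lift fb hresp) := by
    have key : ∀ a b : ↥(Metric.closedBall (0 : EuclideanSpace ℝ (Fin N)) 1),
        fb a = fb b → Quot.mk (collapseRel i j N) a = Quot.mk (collapseRel i j N) b := by
      intro a b hab
      have hG : ∀ k, G i j N (a : EuclideanSpace ℝ (Fin N)) k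
          = G i j N (b : EuclideanSpace ℝ (Fin N)) k := by
        intro k
        exact congrArg (fun z : ↥(Metric.closedBall (0 : EuclideanSpace ℝ (Fin N)) 1) => (z : EuclideanSpace ℝ (Fin N)) k) hab
      rcases G_inj i j N h _ _ (hmem a) (hmem b) hG with hcoord | ⟨hta, htb⟩
      · have : a = b := Subtype.ext (PiLp.ext hcoord)
        rw [this]
      · obtain ⟨hxa, hya, hrepa⟩ := th_zero_repr i j N h _ (hmem a) hta
        obtain ⟨hxb, hyb, hrepb⟩ := th_zero_repr i j N h _ (hmem b) htb
        have hu : ∀ k : Fin N, (k:ℕ) < i →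
            (a : EuclideanSpace ℝ (Fin N)) k = (b : EuclideanSpace ℝ (Fin N)) k := by
          intro k hk
          have := hG k
          rwa [G_apply, G_apply, if_pos hk, if_pos hk] at this
        have hxeq : xOf i j N h (b : EuclideanSpace ℝ (Fin N))
            = xOf i j N h (a : EuclideanSpace ℝ (Fin N)) := by
          apply PiLp.ext
          intro k
          rw [xOf_apply, xOf_apply]
          exact (hu ⟨k, by omega⟩ (by simp only [Fin.val_mk]; exact k.2)).symm
        apply Quot.sound
        refine ⟨xOf i j N h (a : EuclideanSpace ℝ (Fin N)),
          yOf i j N h (a : EuclideanSpace ℝ (Fin N)),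
          yOf i j N h (b : EuclideanSpace ℝ (Fin N)), hxa, hya, hyb, ?_, ?_⟩
        · exact PiLp.ext hrepa
        · rw [← hxeq]
          exact PiLp.ext hrepb
    intro a b
    induction a using Quot.ind with
    | _ a =>
      induction b using Quot.ind with
      | _ b => exact key a b
  haveI : CompactSpace ↥(Metric.closedBall (0 : EuclideanSpace ℝ (Fin N)) 1) :=
    isCompact_iff_compactSpace.mp (isCompact_closedBall _ _)
  haveI : CompactSpace (Quot (collapseRel i j N)) := by
    constructor
    have h1 : IsCompact (Set.range (Quot.mk (collapseRel i j N))) :=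
      isCompact_range continuous_quot_mk
    rwa [Set.range_eq_univ.mpr Quot.mk_surjective] at h1
  have hcont : Continuous (Quot.lift fb hresp) := continuous_quot_lift hresp hfb_cont
  exact ⟨Continuous.homeoOfEquivCompactToT2
    (f := Equiv.ofBijective (Quot.lift fb hresp) ⟨hinj, hsurj⟩) hcont⟩


/-- Collapsing the `D^j` factor of a standardly embedded product `D^i × D^j` inside the
boundary sphere of the closed disc `D^N` (`N > i + j`) yields a space homeomorphic
to `D^N`. -/
theorem stmt7 (i j N : ℕ) (h : i + j < N) :
    Nonempty (Quot (collapseRel i j N) ≃ₜ ↥(closedBall (0 : EuclideanSpace ℝ (Fin N)) 1)) := by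
  exact stmt7'aux i j N h
end
end

section
/- The n-simplex {(t₁,…,tₙ) : 0 ≤ t₁ ≤ … ≤ tₙ ≤ 1} can be subdivided into 2^{n-1} n-dimensional prisms, indexed by the objects of the poset Ξ_n (the (n−1)-cube poset): the piece indexed by a tuple with k blocks is homeomorphic to Δ^k × [0,1]^{n-k}, and these prisms are cut out by n−1 hyperplanes each containing a fixed line ℓ parallel to an edge e of the simplex and parallel to one of the n−1 facets containing e. -/
open Set Bornology


/-- `Δ(n) = {(t₁,…,tₙ) : 0 ≤ t₁ ≤ … ≤ tₙ ≤ 1}`, the `n`-dimensional simplex. -/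
def orderedConfig (n : ℕ) : Set (Fin n → ℝ) :=
  {t | Monotone t ∧ ∀ i, t i ∈ Set.Icc (0 : ℝ) 1}

/-- The `i`-th consecutive difference `t_{i+2} - t_{i+1}` of a configuration. -/
def diff (n : ℕ) (t : Fin n → ℝ) (i : Fin (n - 1)) : ℝ :=
  t ⟨(i : ℕ) + 1, by omega⟩ - t ⟨(i : ℕ), by omega⟩

/-- The prism of the subdivision indexed by the subset `S ⊆ {1,…,n-1}` (equivalently by
an ordered composition of `n`; the corresponding number of blocks is `k = n - #S`):
the part of the simplex cut out by the hyperplanes `t_{i+1} - t_i = c_i`.  Each such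
hyperplane contains the line `ℓ` `{(a, a + c₁, a + c₁ + c₂, …)}` parallel to the edge
`e` from `(0,…,0)` to `(1,…,1)` and is parallel to the facet `t_i = t_{i+1}`, one of
the `n-1` facets of the simplex containing `e`. -/
def prismPiece (n : ℕ) (c : Fin (n - 1) → ℝ) (S : Finset (Fin (n - 1))) :
    Set (Fin n → ℝ) :=
  {t ∈ orderedConfig n |
    ∀ i : Fin (n - 1), (i ∈ S → diff n t i ≤ c i) ∧ (i ∉ S → c i ≤ diff n t i)}

lemma isClosedImpAux {α : Type*} [TopologicalSpace α] {p : Prop} {s : Set α} (hs : IsClosed s) :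
    IsClosed {x | p → x ∈ s} := by
  by_cases hp : p
  · simpa [hp] using hs
  · simp [hp]

lemma isOpen_imp {α : Type*} [TopologicalSpace α] {p : Prop} {s : Set α} (hs : IsOpen s) :
    IsOpen {x | p → x ∈ s} := by
  by_cases hp : p
  · simpa [hp] using hs
  · simp [hp]

lemma continuous_diff (n : ℕ) (i : Fin (n - 1)) : Continuous fun t : Fin n → ℝ => diff n t i := by
  unfold diff
  exact (continuous_apply _).sub (continuous_apply _)

lemma orderedConfig_isClosed (n : ℕ) : IsClosed (orderedConfig n) := by
  have h : orderedConfig n =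
      (⋂ (i : Fin n) (j : Fin n), {t : Fin n → ℝ | i ≤ j → t ∈ {t : Fin n → ℝ | t i ≤ t j}}) ∩
      ⋂ i : Fin n, ({t : Fin n → ℝ | 0 ≤ t i} ∩ {t : Fin n → ℝ | t i ≤ 1}) := by
    ext t
    simp only [orderedConfig, Monotone, Set.mem_setOf_eq, Set.mem_inter_iff, Set.mem_iInter,
      Set.mem_Icc, Set.mem_setOf_eq]
  rw [h]
  refine IsClosed.inter (isClosed_iInter fun i => isClosed_iInter fun j =>
      isClosedImpAux (isClosed_le (continuous_apply i) (continuous_apply j))) ?_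
  exact isClosed_iInter fun i => IsClosed.inter
    (isClosed_le continuous_const (continuous_apply i))
    (isClosed_le (continuous_apply i) continuous_const)

lemma orderedConfig_convex (n : ℕ) : Convex ℝ (orderedConfig n) := by
  intro x hx y hy a b ha hb hab
  obtain ⟨hxm, hxI⟩ := hx; obtain ⟨hym, hyI⟩ := hy
  refine ⟨fun i j hij => ?_, fun i => ?_⟩
  · have h1 := hxm hij
    have h2 := hym hij
    simp only [Pi.add_apply, Pi.smul_apply, smul_eq_mul]
    nlinarith
  · obtain ⟨h1, h2⟩ := hxI i
    obtain ⟨h3, h4⟩ := hyI i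
    simp only [Pi.add_apply, Pi.smul_apply, smul_eq_mul, Set.mem_Icc]
    constructor <;> nlinarith

lemma orderedConfig_isBounded (n : ℕ) : IsBounded (orderedConfig n) := by
  refine isBounded_iff_forall_norm_le.2 ⟨1, fun t ht => ?_⟩
  rw [pi_norm_le_iff_of_nonneg zero_le_one]
  intro i
  rw [Real.norm_eq_abs, abs_le]
  exact ⟨by linarith [(ht.2 i).1], (ht.2 i).2⟩

lemma orderedConfig_interior_nonempty (n : ℕ) (hn : 1 ≤ n) :
    (interior (orderedConfig n)).Nonempty := by
  set U : Set (Fin n → ℝ) :=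
    (⋂ (i : Fin n) (j : Fin n), {t : Fin n → ℝ | (i : ℕ) < (j : ℕ) → t ∈ {t : Fin n → ℝ | t i < t j}}) ∩
      ⋂ i : Fin n, (fun t : Fin n → ℝ => t i) ⁻¹' Set.Ioo 0 1 with hU
  have hUopen : IsOpen U := by
    refine IsOpen.inter (isOpen_iInter_of_finite fun i => isOpen_iInter_of_finite fun j =>
      isOpen_imp (isOpen_lt (continuous_apply i) (continuous_apply j))) ?_
    exact isOpen_iInter_of_finite fun i => isOpen_Ioo.preimage (continuous_apply i)
  have hUsub : U ⊆ orderedConfig n := by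
    rintro t ⟨h1, h2⟩
    simp only [Set.mem_iInter, Set.mem_setOf_eq] at h1
    simp only [Set.mem_iInter, Set.mem_preimage] at h2
    refine ⟨fun i j hij => ?_, fun i => ⟨(h2 i).1.le, (h2 i).2.le⟩⟩
    rcases eq_or_lt_of_le hij with rfl | hlt
    · exact le_rfl
    · exact (h1 i j hlt).le
  have hmem : (fun i : Fin n => ((i : ℕ) + 1) / ((n : ℝ) + 1)) ∈ U := by
    constructor
    · simp only [Set.mem_iInter, Set.mem_setOf_eq]
      intro i j hij
      rw [div_lt_div_iff₀ (by positivity) (by positivity)]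
      have h : ((i : ℕ) : ℝ) < ((j : ℕ) : ℝ) := by exact_mod_cast hij
      nlinarith [Nat.cast_nonneg (α := ℝ) n]
    · simp only [Set.mem_iInter, Set.mem_preimage, Set.mem_Ioo]
      intro i
      have hi : (i : ℕ) < n := i.2
      constructor
      · positivity
      · rw [div_lt_one (by positivity)]
        have : ((i : ℕ) : ℝ) < n := by exact_mod_cast hi
        linarith
  exact ⟨_, interior_maximal hUsub hUopen hmem⟩

lemma prismPiece_isClosed (n : ℕ) (c : Fin (n - 1) → ℝ) (S : Finset (Fin (n - 1))) :
    IsClosed (prismPiece n c S) := by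
  have h : prismPiece n c S = orderedConfig n ∩ ⋂ i : Fin (n - 1),
      ({t : Fin n → ℝ | i ∈ S → t ∈ {t : Fin n → ℝ | diff n t i ≤ c i}} ∩
       {t : Fin n → ℝ | i ∉ S → t ∈ {t : Fin n → ℝ | c i ≤ diff n t i}}) := by
    ext t
    simp only [prismPiece, Set.mem_setOf_eq, Set.mem_inter_iff, Set.mem_iInter,
      Set.sep_setOf, Set.mem_setOf_eq]
  rw [h]
  exact (orderedConfig_isClosed n).inter (isClosed_iInter fun i =>
    (isClosedImpAux (isClosed_le (continuous_diff n i) continuous_const)).inter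
    (isClosedImpAux (isClosed_le continuous_const (continuous_diff n i))))

lemma diff_combo (n : ℕ) (a b : ℝ) (x y : Fin n → ℝ) (i : Fin (n - 1)) :
    diff n (a • x + b • y) i = a * diff n x i + b * diff n y i := by
  simp only [diff, Pi.add_apply, Pi.smul_apply, smul_eq_mul]
  ring

lemma prismPiece_convex (n : ℕ) (c : Fin (n - 1) → ℝ) (S : Finset (Fin (n - 1))) :
    Convex ℝ (prismPiece n c S) := by
  intro x hx y hy a b ha hb hab
  refine ⟨orderedConfig_convex n hx.1 hy.1 ha hb hab, fun i => ⟨fun hi => ?_, fun hi => ?_⟩⟩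
  all_goals have hc' : a * c i + b * c i = c i := by rw [← add_mul, hab, one_mul]
  · have h1 := (hx.2 i).1 hi
    have h2 := (hy.2 i).1 hi
    rw [diff_combo]
    nlinarith [mul_le_mul_of_nonneg_left h1 ha, mul_le_mul_of_nonneg_left h2 hb]
  · have h1 := (hx.2 i).2 hi
    have h2 := (hy.2 i).2 hi
    rw [diff_combo]
    nlinarith [mul_le_mul_of_nonneg_left h1 ha, mul_le_mul_of_nonneg_left h2 hb]

lemma prismPiece_isBounded (n : ℕ) (c : Fin (n - 1) → ℝ) (S : Finset (Fin (n - 1))) :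
    IsBounded (prismPiece n c S) :=
  (orderedConfig_isBounded n).subset fun _ ht => ht.1

lemma prismPiece_interior_nonempty (n : ℕ) (hn : 1 ≤ n) (c : Fin (n - 1) → ℝ)
    (hc : ∀ i, 0 < c i) (hsum : ∑ i, c i < 1) (S : Finset (Fin (n - 1))) :
    (interior (prismPiece n c S)).Nonempty := by
  classical
  set U : Set (Fin n → ℝ) :=
    ((⋂ (p : Fin n) (q : Fin n),
        {t : Fin n → ℝ | (p : ℕ) < (q : ℕ) → t ∈ {t : Fin n → ℝ | t p < t q}}) ∩
      ⋂ p : Fin n, (fun t : Fin n → ℝ => t p) ⁻¹' Set.Ioo 0 1) ∩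
      ⋂ i : Fin (n - 1),
        ({t : Fin n → ℝ | i ∈ S → t ∈ {t : Fin n → ℝ | diff n t i < c i}} ∩
         {t : Fin n → ℝ | i ∉ S → t ∈ {t : Fin n → ℝ | c i < diff n t i}}) with hU
  have hUopen : IsOpen U := by
    refine IsOpen.inter (IsOpen.inter (isOpen_iInter_of_finite fun p =>
        isOpen_iInter_of_finite fun q =>
        isOpen_imp (isOpen_lt (continuous_apply p) (continuous_apply q)))
      (isOpen_iInter_of_finite fun p => isOpen_Ioo.preimage (continuous_apply p))) ?_
    exact isOpen_iInter_of_finite fun i =>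
      (isOpen_imp (isOpen_lt (continuous_diff n i) continuous_const)).inter
      (isOpen_imp (isOpen_lt continuous_const (continuous_diff n i)))
  have hUsub : U ⊆ prismPiece n c S := by
    rintro t ⟨⟨h1, h2⟩, h3⟩
    simp only [Set.mem_iInter, Set.mem_setOf_eq] at h1
    simp only [Set.mem_iInter, Set.mem_preimage] at h2
    simp only [Set.mem_iInter, Set.mem_inter_iff, Set.mem_setOf_eq] at h3
    refine ⟨⟨fun p q hpq => ?_, fun p => ⟨(h2 p).1.le, (h2 p).2.le⟩⟩,
      fun i => ⟨fun hi => ((h3 i).1 hi).le, fun hi => ((h3 i).2 hi).le⟩⟩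
    rcases eq_or_lt_of_le hpq with rfl | hlt
    · exact le_rfl
    · exact (h1 p q hlt).le
  -- the explicit interior point
  have hε : (0 : ℝ) < (1 - ∑ i, c i) / (2 * n) := by
    have hn' : (0 : ℝ) < n := by exact_mod_cast hn
    have : (0 : ℝ) < 1 - ∑ i, c i := by linarith
    positivity
  set ε : ℝ := (1 - ∑ i, c i) / (2 * n) with hεdef
  set d : Fin (n - 1) → ℝ := fun i => if i ∈ S then c i / 2 else c i + ε with hd
  have hd0 : ∀ i, 0 < d i := by
    intro i
    by_cases hi : i ∈ S <;> simp only [hd, hi, if_true, if_false] <;> [linarith [hc i]; linarith [hc i]]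
  have hdce : ∀ i, d i ≤ c i + ε := by
    intro i
    by_cases hi : i ∈ S <;> simp only [hd, hi, if_true, if_false] <;> [linarith [hc i]; linarith]
  set t : Fin n → ℝ := fun j => ε + ∑ i : Fin (n - 1), if (i : ℕ) < (j : ℕ) then d i else 0 with ht
  have hdiff : ∀ i : Fin (n - 1), diff n t i = d i := by
    intro i
    have : diff n t i
        = ∑ l : Fin (n - 1), ((if (l : ℕ) < (i : ℕ) + 1 then d l else 0)
            - (if (l : ℕ) < (i : ℕ) then d l else 0)) := by
      simp only [diff, ht, Finset.sum_sub_distrib]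
      ring
    rw [this]
    have h2 : ∀ l : Fin (n - 1), ((if (l : ℕ) < (i : ℕ) + 1 then d l else 0)
        - (if (l : ℕ) < (i : ℕ) then d l else 0)) = if l = i then d l else 0 := by
      intro l
      rcases eq_or_ne l i with rfl | hne
      · simp
      · have hv : (l : ℕ) ≠ (i : ℕ) := fun hh => hne (Fin.ext hh)
        by_cases hlt : (l : ℕ) < (i : ℕ)
        · have : (l : ℕ) < (i : ℕ) + 1 := by omega
          simp [hlt, this, hne]
        · have : ¬ ((l : ℕ) < (i : ℕ) + 1) := by omega
          simp [hlt, this, hne]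
    rw [Finset.sum_congr rfl fun l _ => h2 l]
    simp
  have hmono : ∀ p q : Fin n, (p : ℕ) < (q : ℕ) → t p < t q := by
    intro p q hpq
    simp only [ht]
    refine add_lt_add_right (Finset.sum_lt_sum (fun l _ => ?_) ?_) ε
    · by_cases h1 : (l : ℕ) < (p : ℕ)
      · have h2 : (l : ℕ) < (q : ℕ) := by omega
        simp [h1, h2]
      · by_cases h2 : (l : ℕ) < (q : ℕ) <;> simp [h1, h2, (hd0 l).le]
    · have hpn : (p : ℕ) < n - 1 := by have := q.2; omega
      refine ⟨⟨(p : ℕ), hpn⟩, Finset.mem_univ _, ?_⟩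
      have h1 : ¬ ((p : ℕ) < (p : ℕ)) := lt_irrefl _
      simp only [h1, if_false, hpq, if_true]
      exact hd0 _
  have hpos : ∀ j, 0 < t j := by
    intro j
    have : (0 : ℝ) ≤ ∑ i : Fin (n - 1), if (i : ℕ) < (j : ℕ) then d i else 0 :=
      Finset.sum_nonneg fun i _ => by by_cases h : (i : ℕ) < (j : ℕ) <;> simp [h, (hd0 i).le]
    simp only [ht]
    linarith
  have hlt1 : ∀ j, t j < 1 := by
    intro j
    have hb : ∑ i : Fin (n - 1), (if (i : ℕ) < (j : ℕ) then d i else 0)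
        ≤ ∑ i : Fin (n - 1), (c i + ε) := by
      refine Finset.sum_le_sum fun i _ => ?_
      by_cases h : (i : ℕ) < (j : ℕ) <;> simp [h, hdce i] <;> linarith [hc i, hε]
    have hcard : ∑ _i : Fin (n - 1), ε = ((n - 1 : ℕ) : ℝ) * ε := by
      rw [Finset.sum_const, Finset.card_univ, Fintype.card_fin, nsmul_eq_mul]
    have hsplit : ∑ i : Fin (n - 1), (c i + ε) = (∑ i, c i) + ((n - 1 : ℕ) : ℝ) * ε := by
      rw [Finset.sum_add_distrib, hcard]
    have hn' : (0 : ℝ) < n := by exact_mod_cast hn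
    have hnc : ((n - 1 : ℕ) : ℝ) ≤ (n : ℝ) - 1 + 1 - 1 := by
      rw [Nat.cast_sub hn]; push_cast; linarith
    have hkey : ε * (n : ℝ) = (1 - ∑ i, c i) / 2 := by
      rw [hεdef]; field_simp
    have : t j ≤ ε + ((∑ i, c i) + ((n - 1 : ℕ) : ℝ) * ε) := by
      simp only [ht]; linarith [hb.trans_eq hsplit]
    nlinarith [hε]
  have hmem : t ∈ U := by
    refine ⟨⟨?_, ?_⟩, ?_⟩
    · simp only [Set.mem_iInter, Set.mem_setOf_eq]
      exact fun p q h => hmono p q h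
    · simp only [Set.mem_iInter, Set.mem_preimage, Set.mem_Ioo]
      exact fun p => ⟨hpos p, hlt1 p⟩
    · simp only [Set.mem_iInter, Set.mem_inter_iff, Set.mem_setOf_eq]
      intro i
      constructor
      · intro hi
        rw [hdiff i]
        simp only [hd, hi, if_true]
        linarith [hc i]
      · intro hi
        rw [hdiff i]
        simp only [hd, hi, if_false]
        linarith [hε]
  exact ⟨t, interior_maximal hUsub hUopen hmem⟩

lemma cube_isBounded (s : ℕ) :
    IsBounded (Set.univ.pi fun _ : Fin s => Set.Icc (0 : ℝ) 1) := by
  refine isBounded_iff_forall_norm_le.2 ⟨1, fun t ht => ?_⟩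
  rw [pi_norm_le_iff_of_nonneg zero_le_one]
  intro i
  rw [Real.norm_eq_abs, abs_le]
  have := ht i (Set.mem_univ i)
  exact ⟨by linarith [this.1], this.2⟩

lemma cube_interior_nonempty (s : ℕ) :
    (interior (Set.univ.pi fun _ : Fin s => Set.Icc (0 : ℝ) 1)).Nonempty := by
  rw [interior_pi_set Set.finite_univ]
  refine ⟨fun _ => 1 / 2, fun i _ => ?_⟩
  rw [interior_Icc]
  constructor <;> norm_num

/-- The subtype of the product cube is homeomorphic to the product of the subtypes. -/
def cubeHomeo (s : ℕ) :
    ↥(Set.univ.pi fun _ : Fin s => Set.Icc (0 : ℝ) 1) ≃ₜ (Fin s → ↥(Set.Icc (0 : ℝ) 1)) where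
  toFun x i := ⟨x.1 i, x.2 i (Set.mem_univ i)⟩
  invFun f := ⟨fun i => (f i).1, fun i _ => (f i).2⟩
  left_inv x := rfl
  right_inv f := rfl
  continuous_toFun := continuous_pi fun i =>
    Continuous.subtype_mk ((continuous_apply i).comp continuous_subtype_val) _
  continuous_invFun :=
    Continuous.subtype_mk (continuous_pi fun i => continuous_subtype_val.comp (continuous_apply i)) _


/-- The `n`-simplex `{0 ≤ t₁ ≤ … ≤ tₙ ≤ 1}` is subdivided into `2^{n-1}` `n`-dimensional
prisms indexed by the subsets `S` of `{1,…,n-1}` (i.e. by the objects of the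
`(n-1)`-cube poset `Ξ_n` of ordered compositions of `n`), cut out by the `n-1`
hyperplanes `t_{i+1} - t_i = c_i`, each containing the fixed line `ℓ` (parallel to the
edge `e` of the simplex and meeting its interior) and parallel to one of the `n-1`
facets of the simplex containing `e`: the pieces cover the simplex, and the piece
indexed by a composition with `k = n - #S` blocks is homeomorphic to
`Δ^k × [0,1]^{n-k}`. -/
theorem stmt14 (n : ℕ) (hn : 1 ≤ n)
    (c : Fin (n - 1) → ℝ) (hc : ∀ i, 0 < c i) (hsum : ∑ i, c i < 1) :
    (⋃ S : Finset (Fin (n - 1)), prismPiece n c S) = orderedConfig n ∧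
    ∀ S : Finset (Fin (n - 1)),
      Nonempty (↥(prismPiece n c S) ≃ₜ
        (↥(orderedConfig (n - S.card)) × (Fin S.card → ↥(Set.Icc (0 : ℝ) 1)))) := by
  classical
  constructor
  · apply Set.Subset.antisymm
    · exact Set.iUnion_subset fun S t ht => ht.1
    · intro t ht
      refine Set.mem_iUnion.2 ⟨Finset.univ.filter (fun i => diff n t i ≤ c i),
        ht, fun i => ⟨fun hi => ?_, fun hi => ?_⟩⟩
      · exact (Finset.mem_filter.1 hi).2
      · have h : ¬ (diff n t i ≤ c i) :=
          fun h => hi (Finset.mem_filter.2 ⟨Finset.mem_univ _, h⟩)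
        exact (not_le.1 h).le
  · intro S
    have hS : S.card ≤ n - 1 := by simpa using Finset.card_le_univ S
    have hk1 : 1 ≤ n - S.card := by omega
    have hks : (n - S.card) + S.card = n := by omega
    let e : Fin (n - S.card) ⊕ Fin S.card ≃ Fin n := finSumFinEquiv.trans (finCongr hks)
    let Lin : ((Fin (n - S.card) → ℝ) × (Fin S.card → ℝ)) ≃ₗ[ℝ] (Fin n → ℝ) :=
      (LinearEquiv.sumArrowLequivProdArrow _ _ ℝ ℝ).symm.trans (LinearEquiv.funCongrLeft ℝ ℝ e.symm)
    let H : ((Fin (n - S.card) → ℝ) × (Fin S.card → ℝ)) ≃ₜ (Fin n → ℝ) :=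
      Lin.toContinuousLinearEquiv.toHomeomorph
    set D := (orderedConfig (n - S.card)) ×ˢ
        (Set.univ.pi fun _ : Fin S.card => Set.Icc (0 : ℝ) 1) with hD
    have hDconv : Convex ℝ D :=
      (orderedConfig_convex _).prod (convex_pi fun _ _ => convex_Icc 0 1)
    have hDclosed : IsClosed D :=
      (orderedConfig_isClosed _).prod (isClosed_set_pi fun _ _ => isClosed_Icc)
    have hDbdd : IsBounded D := (orderedConfig_isBounded _).prod (cube_isBounded _)
    have hDint : (interior D).Nonempty := by
      rw [hD, interior_prod_eq]
      exact (orderedConfig_interior_nonempty _ hk1).prod (cube_interior_nonempty _)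
    have hcoeH : ⇑H = ⇑Lin := by
      show ⇑Lin.toContinuousLinearEquiv.toHomeomorph = ⇑Lin
      rw [ContinuousLinearEquiv.coe_toHomeomorph]
      exact Lin.coe_toContinuousLinearEquiv'
    have hD'conv : Convex ℝ (H '' D) := by
      rw [hcoeH]
      simpa using hDconv.linear_image Lin.toLinearMap
    have hD'closed : IsClosed (H '' D) := H.isClosedMap D hDclosed
    have hD'vb : Bornology.IsVonNBounded ℝ (H '' D) :=
      NormedSpace.isVonNBounded_of_isBounded _
        (((Metric.isCompact_iff_isClosed_bounded.2 ⟨hDclosed, hDbdd⟩).image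
          H.continuous).isBounded)
    have hD'int : (interior (H '' D)).Nonempty := by
      rw [← H.image_interior]
      exact hDint.image _
    obtain ⟨f, -, hf, -⟩ := exists_homeomorph_image_eq (prismPiece_convex n c S)
      (prismPiece_interior_nonempty n hn c hc hsum S)
      (NormedSpace.isVonNBounded_of_isBounded _ (prismPiece_isBounded n c S))
      hD'conv hD'int hD'vb
    rw [(prismPiece_isClosed n c S).closure_eq, hD'closed.closure_eq] at hf
    exact ⟨(((f.image _).trans (Homeomorph.setCongr hf)).trans (H.image D).symm).trans
      (((Homeomorph.setCongr hD).trans (Homeomorph.Set.prod _ _)).trans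
        (Homeomorph.prodCongr (Homeomorph.refl _) (cubeHomeo _)))⟩
end
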